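/- Suppose t ≥ 2 and P is a finite poset with sat*([t]^n, P) = O(1) as n → ∞. Then there exists N such that the function n ↦ sat*([t]^n, P) is constant on integers n > N. -/
import Mathlib


open Filter

/-- An induced copy of the poset `P` inside the family `F`. -/
def InducedCopy (P : Type) [PartialOrder P] {α : Type} [PartialOrder α]
    (F : Set α) : Prop :=
  ∃ φ : P → α, Function.Injective φ ∧ (∀ x, φ x ∈ F) ∧ ∀ x y, φ x ≤ φ y ↔ x ≤ y

/-- `F` is induced `P`-free. -/
def PFree (P : Type) [PartialOrder P] {α : Type} [PartialOrder α] (F : Set α) : Prop :=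
  ¬ InducedCopy P F

/-- `F` is induced `P`-free and induced `P`-saturated. -/
def PSaturated (P : Type) [PartialOrder P] {α : Type} [PartialOrder α] (F : Set α) : Prop :=
  PFree P F ∧ ∀ g ∉ F, InducedCopy P (insert g F)

/-- The lifting operator `L_i`, copying coordinate `i` into a new last coordinate. -/
def lift {t n : ℕ} (i : Fin n) (f : Fin n → Fin t) : Fin (n + 1) → Fin t :=
  Fin.snoc f (f i)

/-- The coordinate-dropping operator `D_i`. -/
def drop {t n : ℕ} (i : Fin (n + 1)) (f : Fin (n + 1) → Fin t) : Fin n → Fin t :=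
  fun x => f (i.succAbove x)

/-- Coordinate `i` is separating for `F`. -/
def Separating {t n : ℕ} (F : Set (Fin n → Fin t)) (i : Fin n) : Prop :=
  ∃ f ∈ F, ∃ f' ∈ F, f ≠ f' ∧ (∀ x, x ≠ i → f x ≤ f' x) ∧ f' i < f i

/-- The induced saturation number `sat*([t]^n, P)`. -/
noncomputable def satStar (t n : ℕ) (P : Type) [PartialOrder P] : ℕ :=
  sInf {m | ∃ F : Set (Fin n → Fin t), PSaturated P F ∧ F.ncard = m}

/-- The antichain on `k` elements. -/
def AC (k : ℕ) := Fin k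

instance (k : ℕ) : PartialOrder (AC k) where
  le := Eq
  le_refl _ := rfl
  le_trans _ _ _ h h' := Eq.trans h h'
  le_antisymm _ _ h _ := h

/-- The unique cover twin property. -/
def UCTP (P : Type) [PartialOrder P] : Prop :=
  ∀ x y : P, y ⋖ x → ∃ y', y' ≠ y ∧ y' ≠ x ∧ y' ⋖ x

section Aux

variable {t n : ℕ}

lemma drop_le_iff {i : Fin (n+1)} {f f' : Fin (n+1) → Fin t} :
    drop i f ≤ drop i f' ↔ ∀ x, x ≠ i → f x ≤ f' x := by
  constructor
  · intro h x hx
    obtain ⟨k, rfl⟩ := Fin.exists_succAbove_eq hx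
    exact h k
  · intro h k
    exact h _ (Fin.succAbove_ne i k)

lemma le_iff_drop {i : Fin (n+1)} {f f' : Fin (n+1) → Fin t} :
    f ≤ f' ↔ drop i f ≤ drop i f' ∧ f i ≤ f' i := by
  constructor
  · exact fun h => ⟨fun k => h _, h i⟩
  · rintro ⟨h1, h2⟩ j
    by_cases hj : j = i
    · subst hj; exact h2
    · exact drop_le_iff.mp h1 j hj

lemma nonsep_le {F : Set (Fin (n+1) → Fin t)} {i : Fin (n+1)}
    (hns : ¬ Separating F i) {f f' : Fin (n+1) → Fin t}
    (hf : f ∈ F) (hf' : f' ∈ F) (h : drop i f ≤ drop i f') : f ≤ f' := by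
  by_cases he : f = f'
  · subst he; exact le_refl f
  · refine le_iff_drop.mpr ⟨h, ?_⟩
    by_contra hlt
    exact hns ⟨f, hf, f', hf', he, drop_le_iff.mp h, lt_of_not_ge hlt⟩

lemma nonsep_inj {F : Set (Fin (n+1) → Fin t)} {i : Fin (n+1)}
    (hns : ¬ Separating F i) {f f' : Fin (n+1) → Fin t}
    (hf : f ∈ F) (hf' : f' ∈ F) (h : drop i f = drop i f') : f = f' :=
  le_antisymm (nonsep_le hns hf hf' h.le) (nonsep_le hns hf' hf h.ge)

lemma drop_insertNth (i : Fin (n+1)) (c : Fin t) (h : Fin n → Fin t) :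
    drop i (i.insertNth c h) = h := by
  funext x
  simp [drop]

lemma drop_saturated (ht : 1 ≤ t) (P : Type) [PartialOrder P]
    {F : Set (Fin (n+1) → Fin t)} (hsat : PSaturated P F) {i : Fin (n+1)}
    (hns : ¬ Separating F i) : PSaturated P (drop i '' F) := by
  constructor
  · rintro ⟨φ, hinj, hmem, hord⟩
    choose ψ hψF hψ using hmem
    refine hsat.1 ⟨ψ, ?_, hψF, ?_⟩
    · intro a b hab
      apply hinj
      rw [← hψ a, ← hψ b, hab]
    · intro a b
      rw [← hord a b]
      constructor
      · intro hle
        have : drop i (ψ a) ≤ drop i (ψ b) := fun k => hle _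
        rw [hψ a, hψ b] at this
        exact this
      · intro hle
        refine nonsep_le hns (hψF a) (hψF b) ?_
        rw [hψ a, hψ b]
        exact hle
  · intro h hh
    have hc : ∃ c : Fin t, ∀ f ∈ F,
        (drop i f ≤ h → f i ≤ c) ∧ (h ≤ drop i f → c ≤ f i) := by
      by_cases hex : ∃ f ∈ F, drop i f ≤ h
      · obtain ⟨f₀, hf₀⟩ := hex
        obtain ⟨f₁, hf₁, hmax⟩ := Set.exists_max_image {f ∈ F | drop i f ≤ h}
          (fun f => f i) (Set.toFinite _) ⟨f₀, hf₀⟩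
        refine ⟨f₁ i, fun f hf => ⟨fun hle => hmax f ⟨hf, hle⟩, fun hge => ?_⟩⟩
        exact (nonsep_le hns hf₁.1 hf (le_trans hf₁.2 hge)) i
      · push_neg at hex
        refine ⟨⟨0, by omega⟩, fun f hf => ⟨fun hle => absurd hle (hex f hf), fun _ => ?_⟩⟩
        simp [Fin.le_def]
    obtain ⟨c, hc⟩ := hc
    set g : Fin (n+1) → Fin t := i.insertNth c h with hg
    have hdg : drop i g = h := drop_insertNth i c h
    have hgi : g i = c := by simp [hg]
    have hgF : g ∉ F := fun hmem => hh ⟨g, hmem, hdg⟩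
    obtain ⟨φ, hinj, hmem, hord⟩ := hsat.2 g hgF
    have key : ∀ a b : P, drop i (φ a) ≤ drop i (φ b) → φ a ≤ φ b := by
      intro a b hd
      rcases hmem a with ha | ha
      · rcases hmem b with hb | hb
        · rw [ha, hb]
        · rw [ha] at hd ⊢
          rw [hdg] at hd
          exact le_iff_drop.mpr ⟨by rw [hdg]; exact hd, by rw [hgi]; exact (hc _ hb).2 hd⟩
      · rcases hmem b with hb | hb
        · rw [hb] at hd ⊢
          rw [hdg] at hd
          exact le_iff_drop.mpr ⟨by rw [hdg]; exact hd, by rw [hgi]; exact (hc _ ha).1 hd⟩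
        · exact nonsep_le hns ha hb hd
    refine ⟨fun x => drop i (φ x), ?_, ?_, ?_⟩
    · intro a b hab
      exact hinj (le_antisymm (key a b hab.le) (key b a hab.ge))
    · intro x
      show drop i (φ x) ∈ insert h (drop i '' F)
      rcases hmem x with hx | hx
      · rw [hx, hdg]; exact Set.mem_insert _ _
      · exact Set.mem_insert_iff.mpr (Or.inr ⟨φ x, hx, rfl⟩)
    · intro a b
      rw [← hord a b]
      exact ⟨key a b, fun hle => fun k => hle _⟩

lemma exists_saturated (t n : ℕ) (P : Type) [PartialOrder P] [Finite P] [Nonempty P] :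
    ∃ F : Set (Fin n → Fin t), PSaturated P F := by
  classical
  haveI : Fintype P := Fintype.ofFinite P
  let 𝒮 : Finset (Finset (Fin n → Fin t)) :=
    Finset.univ.filter (fun F => PFree P (↑F : Set (Fin n → Fin t)))
  have mem𝒮 : ∀ G : Finset (Fin n → Fin t), G ∈ 𝒮 ↔ PFree P (↑G : Set (Fin n → Fin t)) := by
    intro G
    simp [𝒮]
  have hempty : (∅ : Finset (Fin n → Fin t)) ∈ 𝒮 := by
    rw [mem𝒮]
    rintro ⟨φ, -, hmem, -⟩
    have := hmem (Classical.arbitrary P)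
    simp at this
  obtain ⟨F, hF, hmax⟩ := Finset.exists_max_image 𝒮 Finset.card ⟨∅, hempty⟩
  have hFree : PFree P (↑F : Set (Fin n → Fin t)) := (mem𝒮 F).mp hF
  refine ⟨↑F, hFree, ?_⟩
  intro g hg
  by_contra hcopy
  have hg' : g ∉ F := by simpa using hg
  have hins : insert g F ∈ 𝒮 := by
    rw [mem𝒮, Finset.coe_insert]
    exact hcopy
  have := hmax _ hins
  rw [Finset.card_insert_of_notMem hg'] at this
  omega

lemma satStar_mem (t n : ℕ) (P : Type) [PartialOrder P] [Finite P] [Nonempty P] :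
    ∃ F : Set (Fin n → Fin t), PSaturated P F ∧ F.ncard = satStar t n P := by
  obtain ⟨F, hF⟩ := exists_saturated t n P
  have : satStar t n P ∈ {m | ∃ F : Set (Fin n → Fin t), PSaturated P F ∧ F.ncard = m} :=
    Nat.sInf_mem ⟨F.ncard, F, hF, rfl⟩
  exact this

lemma exists_nonsep (C : ℕ) {F : Set (Fin (n+1) → Fin t)} (hcard : F.ncard ≤ C)
    (hn : C * C ≤ n) : ∃ i : Fin (n+1), ¬ Separating F i := by
  by_contra hall
  push_neg at hall
  choose f hf f' hf' hne hord hlt using hall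
  have hFfin : F.Finite := Set.toFinite F
  haveI : Finite ↥F := hFfin.to_subtype
  have hinj : Function.Injective
      (fun i => ((⟨f i, hf i⟩ : ↥F), (⟨f' i, hf' i⟩ : ↥F))) := by
    intro i j hij
    by_contra hne'
    have h1 : f i = f j := congrArg (fun p => (p.1 : Fin (n+1) → Fin t)) hij
    have h2 : f' i = f' j := congrArg (fun p => (p.2 : Fin (n+1) → Fin t)) hij
    have h3 : f i j ≤ f' i j := hord i j (fun h => hne' h.symm)
    rw [h1, h2] at h3
    exact absurd (hlt j) (not_lt.mpr h3)
  have hle : Nat.card (Fin (n+1)) ≤ Nat.card (↥F × ↥F) :=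
    Nat.card_le_card_of_injective _ hinj
  rw [Nat.card_prod, Nat.card_coe_set_eq, Nat.card_eq_fintype_card, Fintype.card_fin] at hle
  have : n + 1 ≤ C * C := le_trans hle (Nat.mul_le_mul hcard hcard)
  omega

end Aux

theorem stmt15 (t : ℕ) (ht : 2 ≤ t) (P : Type) [PartialOrder P] [Finite P]
    (hbd : ∃ C : ℕ, ∀ n : ℕ, satStar t n P ≤ C) :
    ∃ N : ℕ, ∀ m n : ℕ, N < m → N < n → satStar t m P = satStar t n P := by
  classical
  obtain ⟨C, hbd⟩ := hbd
  by_cases hP : Nonempty P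
  · haveI := hP
    have ht1 : 1 ≤ t := by omega
    have step : ∀ n : ℕ, C * C ≤ n → satStar t n P ≤ satStar t (n+1) P := by
      intro n hn
      obtain ⟨F, hFsat, hFcard⟩ := satStar_mem t (n+1) P
      have hcard : F.ncard ≤ C := by rw [hFcard]; exact hbd (n+1)
      obtain ⟨i, hi⟩ := exists_nonsep C hcard hn
      have hsat' := drop_saturated ht1 P hFsat hi
      have himg : (drop i '' F).ncard = F.ncard :=
        Set.ncard_image_of_injOn (fun f hf f' hf' h => nonsep_inj hi hf hf' h)
      have hle : satStar t n P ≤ (drop i '' F).ncard :=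
        Nat.sInf_le ⟨drop i '' F, hsat', rfl⟩
      rw [himg, hFcard] at hle
      exact hle
    have mono : ∀ a b : ℕ, C * C ≤ a → a ≤ b → satStar t a P ≤ satStar t b P := by
      intro a b ha hab
      induction b, hab using Nat.le_induction with
      | base => exact le_refl _
      | succ n hn ih => exact le_trans ih (step n (le_trans ha hn))
    set S := {v | ∃ m : ℕ, C * C ≤ m ∧ satStar t m P = v} with hS
    have hne : S.Nonempty := ⟨satStar t (C*C) P, C*C, le_refl _, rfl⟩
    have hbdd : BddAbove S := ⟨C, by rintro v ⟨m, -, rfl⟩; exact hbd m⟩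
    obtain ⟨m₀, hm₀, hv⟩ := Nat.sSup_mem hne hbdd
    refine ⟨m₀, ?_⟩
    have hconst : ∀ x : ℕ, m₀ < x → satStar t x P = sSup S := by
      intro x hx
      have h1 : satStar t m₀ P ≤ satStar t x P := mono m₀ x hm₀ hx.le
      have h2 : satStar t x P ≤ sSup S := le_csSup hbdd ⟨x, le_trans hm₀ hx.le, rfl⟩
      exact le_antisymm h2 (hv ▸ h1)
    intro a b ha hb
    rw [hconst a ha, hconst b hb]
  · haveI : IsEmpty P := not_nonempty_iff.mp hP
    have hz : ∀ n : ℕ, satStar t n P = 0 := by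
      intro n
      have hemp : {m | ∃ F : Set (Fin n → Fin t), PSaturated P F ∧ F.ncard = m} = ∅ := by
        ext m
        simp only [Set.mem_setOf_eq, Set.mem_empty_iff_false, iff_false, not_exists]
        rintro F ⟨hF, -⟩
        exact hF.1 ⟨fun x => isEmptyElim x, fun a => isEmptyElim a,
          fun x => isEmptyElim x, fun x => isEmptyElim x⟩
      rw [satStar, hemp, Nat.sInf_empty]
    exact ⟨0, fun m n _ _ => by rw [hz m, hz n]⟩
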